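/- Let η ∈ C_c^∞(ℝ^d;ℝ^d), let Φ be the flow of η, and set A(t,x) := det(D_x Φ_t(x)) · (D_x Φ_t(x))^{-1} (D_x Φ_t(x))^{-T}. Then for every x ∈ ℝ^d one has ∂²_t A(0,x) = 2 δ²A(x), where δ²A := (Dη)(Dη)^T + ½((Dη)^T)² + ½(Dη)² − ½ (η·∇)[(Dη)^T + Dη] − ((Dη)^T + Dη) div η + I · ( (div η)² + η·∇(div η) )/2, and where (η·∇)M denotes the entrywise directional derivative Σ_k η_k ∂_k M of a matrix-valued field M and I is the d×d identity matrix. -/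

import Mathlib

open MeasureTheory Matrix
open scoped RealInnerProductSpace

/-- The divergence of a vector field on `ℝ^d`: the trace of its Jacobian. -/
noncomputable def vdiv {d : ℕ} (η : EuclideanSpace ℝ (Fin d) → EuclideanSpace ℝ (Fin d))
    (x : EuclideanSpace ℝ (Fin d)) : ℝ :=
  LinearMap.trace ℝ (EuclideanSpace ℝ (Fin d)) (fderiv ℝ η x).toLinearMap

/-- The Jacobian matrix (w.r.t. the standard basis) of a map `ℝ^d → ℝ^d` at a point. -/
noncomputable def jacMatrix {d : ℕ}
    (Φ : EuclideanSpace ℝ (Fin d) → EuclideanSpace ℝ (Fin d))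
    (x : EuclideanSpace ℝ (Fin d)) : Matrix (Fin d) (Fin d) ℝ :=
  LinearMap.toMatrix (EuclideanSpace.basisFun (Fin d) ℝ).toBasis
    (EuclideanSpace.basisFun (Fin d) ℝ).toBasis (fderiv ℝ Φ x).toLinearMap

/-- The entrywise directional derivative `(η·∇)M = Σ_k η_k ∂_k M` of a matrix-valued
field `M` along the vector field `η`. -/
noncomputable def dirDerivMat {d : ℕ}
    (η : EuclideanSpace ℝ (Fin d) → EuclideanSpace ℝ (Fin d))
    (M : EuclideanSpace ℝ (Fin d) → Matrix (Fin d) (Fin d) ℝ)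
    (x : EuclideanSpace ℝ (Fin d)) : Matrix (Fin d) (Fin d) ℝ :=
  Matrix.of fun i j => fderiv ℝ (fun y => M y i j) x (η x)

/-- The matrix `δ²A` from the second variation of the one-phase functional. -/
noncomputable def delta2A {d : ℕ}
    (η : EuclideanSpace ℝ (Fin d) → EuclideanSpace ℝ (Fin d))
    (x : EuclideanSpace ℝ (Fin d)) : Matrix (Fin d) (Fin d) ℝ :=
  jacMatrix η x * (jacMatrix η x)ᵀ
    + (1 / 2 : ℝ) • ((jacMatrix η x)ᵀ * (jacMatrix η x)ᵀ)
    + (1 / 2 : ℝ) • (jacMatrix η x * jacMatrix η x)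
    - (1 / 2 : ℝ) • dirDerivMat η (fun y => (jacMatrix η y)ᵀ + jacMatrix η y) x
    - vdiv η x • ((jacMatrix η x)ᵀ + jacMatrix η x)
    + (((vdiv η x) ^ 2 + ⟪η x, gradient (vdiv η) x⟫) / 2) •
        (1 : Matrix (Fin d) (Fin d) ℝ)

section Aux

variable {d : ℕ}

local notation "E" => EuclideanSpace ℝ (Fin d)

/-- Entrywise `HasDerivAt` for matrix-valued functions of a real variable. -/
def HDm (F : ℝ → Matrix (Fin d) (Fin d) ℝ) (F' : Matrix (Fin d) (Fin d) ℝ) (t : ℝ) : Prop :=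
  ∀ i j, HasDerivAt (fun s => F s i j) (F' i j) t

namespace HDm

variable {F G : ℝ → Matrix (Fin d) (Fin d) ℝ} {F' G' : Matrix (Fin d) (Fin d) ℝ} {t : ℝ}

lemma mul (hF : HDm F F' t) (hG : HDm G G' t) :
    HDm (fun s => F s * G s) (F' * G t + F t * G') t := by
  intro i j
  have h : (fun s => (F s * G s) i j) = fun s => ∑ k, F s i k * G s k j := by
    funext s; simp [Matrix.mul_apply]
  rw [h]
  have := HasDerivAt.fun_sum (fun k (_ : k ∈ Finset.univ) => (hF i k).fun_mul (hG k j))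
  have hv : (F' * G t + F t * G') i j = ∑ k, (F' i k * G t k j + F t i k * G' k j) := by
    simp [Matrix.add_apply, Matrix.mul_apply, Finset.sum_add_distrib]
  rw [hv]; exact this

lemma add (hF : HDm F F' t) (hG : HDm G G' t) :
    HDm (fun s => F s + G s) (F' + G') t := fun i j => by
  simpa [Matrix.add_apply] using (hF i j).fun_add (hG i j)

lemma neg (hF : HDm F F' t) : HDm (fun s => -(F s)) (-F') t := fun i j => by
  simpa [Matrix.neg_apply] using (hF i j).fun_neg

lemma transpose (hF : HDm F F' t) : HDm (fun s => (F s)ᵀ) F'ᵀ t := fun i j => hF j i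

lemma smul {c : ℝ → ℝ} {c' : ℝ} (hc : HasDerivAt c c' t) (hF : HDm F F' t) :
    HDm (fun s => c s • F s) (c' • F t + c t • F') t := fun i j => by
  simpa [Matrix.add_apply, Matrix.smul_apply, smul_eq_mul] using (hc.fun_mul (hF i j))

end HDm

lemma det_updateRow_expand (M : Matrix (Fin d) (Fin d) ℝ) (i : Fin d) (c : Fin d → ℝ) :
    (M.updateRow i c).det
      = ∑ σ : Equiv.Perm (Fin d), (Equiv.Perm.sign σ : ℤ) *
          (c (σ i) * ∏ j ∈ Finset.univ.erase i, M j (σ j)) := by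
  rw [← Matrix.det_transpose, Matrix.det_apply']
  refine Finset.sum_congr rfl fun σ _ => ?_
  congr 1
  have h : ∀ j : Fin d, (M.updateRow i c)ᵀ (σ j) j = (M.updateRow i c) j (σ j) := fun j => rfl
  rw [Finset.prod_congr rfl fun j _ => h j,
    ← Finset.mul_prod_erase Finset.univ _ (Finset.mem_univ i)]
  rw [Matrix.updateRow_self]
  congr 1
  refine Finset.prod_congr rfl fun j hj => ?_
  exact congrFun (Matrix.updateRow_ne (Finset.ne_of_mem_erase hj)) (σ j)

lemma det_row_expand (A : Matrix (Fin d) (Fin d) ℝ) :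
    A.det = ∑ σ : Equiv.Perm (Fin d), (Equiv.Perm.sign σ : ℤ) * ∏ i, A i (σ i) := by
  rw [← Matrix.det_transpose, Matrix.det_apply']
  rfl

/-- Derivative of the determinant of a matrix-valued function of a real variable. -/
lemma hasDerivAt_det {m : ℝ → Matrix (Fin d) (Fin d) ℝ} {m' : Matrix (Fin d) (Fin d) ℝ} {t : ℝ}
    (h : ∀ i j, HasDerivAt (fun s => m s i j) (m' i j) t) :
    HasDerivAt (fun s => (m s).det) (∑ i, ((m t).updateRow i (m' i)).det) t := by
  have key : HasDerivAt (fun s => (m s).det)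
      (∑ σ : Equiv.Perm (Fin d), (Equiv.Perm.sign σ : ℤ) *
        (∑ i, (∏ j ∈ Finset.univ.erase i, m t j (σ j)) • m' i (σ i))) t := by
    have hfun : (fun s => (m s).det) = fun s => ∑ σ : Equiv.Perm (Fin d),
        (Equiv.Perm.sign σ : ℤ) * ∏ i, m s i (σ i) := by
      funext s; exact det_row_expand (m s)
    rw [hfun]
    exact HasDerivAt.fun_sum fun σ _ =>
      ((HasDerivAt.fun_finsetProd (fun i _ => h i (σ i))).const_mul _)
  convert key using 1
  have h2 : ∀ i : Fin d, ((m t).updateRow i (m' i)).det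
      = ∑ σ : Equiv.Perm (Fin d), (Equiv.Perm.sign σ : ℤ) *
          (m' i (σ i) * ∏ j ∈ Finset.univ.erase i, m t j (σ j)) := fun i =>
    det_updateRow_expand _ i _
  rw [Finset.sum_congr rfl fun i _ => h2 i, Finset.sum_comm]
  refine Finset.sum_congr rfl fun σ _ => ?_
  rw [Finset.mul_sum]
  refine Finset.sum_congr rfl fun i _ => ?_
  simp [smul_eq_mul]; ring

lemma jacobi_sum (M B : Matrix (Fin d) (Fin d) ℝ) :
    ∑ i, (M.updateRow i ((B * M) i)).det = Matrix.trace B * M.det := by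
  have hrow : ∀ i : Fin d, (B * M) i = ∑ k, B i k • M k := by
    intro i; funext j
    simp [Matrix.mul_apply, Finset.sum_apply]
  calc ∑ i, (M.updateRow i ((B * M) i)).det
      = ∑ i, (B i i) • M.det := by
        refine Finset.sum_congr rfl fun i _ => ?_
        rw [hrow i, Matrix.det_updateRow_sum]
    _ = Matrix.trace B * M.det := by
        rw [Matrix.trace, ← Finset.sum_smul]; simp [Matrix.diag]

lemma jacMatrix_apply (f : E → E) (x : E) (i j : Fin d) :
    jacMatrix f x i j = fderiv ℝ f x (EuclideanSpace.single j 1) i := by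
  simp [jacMatrix, LinearMap.toMatrix_apply]

lemma jacMatrix_mul_apply (f g : E → E) (y x : E) (i j : Fin d) :
    (jacMatrix f y * jacMatrix g x) i j
      = (fderiv ℝ f y (fderiv ℝ g x (EuclideanSpace.single j 1))) i := by
  rw [jacMatrix, jacMatrix, ← LinearMap.toMatrix_comp, LinearMap.toMatrix_apply]
  simp

lemma jacMatrix_id (x : E) : jacMatrix (fun y : E => y) x = 1 := by
  have h : fderiv ℝ (fun y : E => y) x = ContinuousLinearMap.id ℝ E := fderiv_id'
  ext i j
  rw [jacMatrix_apply, h]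
  simp [Matrix.one_apply, EuclideanSpace.single_apply, eq_comm]

lemma vdiv_eq_trace (η : E → E) (y : E) :
    vdiv η y = Matrix.trace (jacMatrix η y) := by
  rw [vdiv, LinearMap.trace_eq_matrix_trace ℝ (EuclideanSpace.basisFun (Fin d) ℝ).toBasis]
  rfl

/-- Smoothness of the Jacobian matrix entries of a smooth map. -/
lemma diff_jac_entry {η : E → E} (hη : ContDiff ℝ (⊤ : ℕ∞) η) (i j : Fin d) :
    Differentiable ℝ (fun y => jacMatrix η y i j) := by
  have h : (fun y => jacMatrix η y i j)
      = fun y => (EuclideanSpace.proj i : E →L[ℝ] ℝ)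
          ((ContinuousLinearMap.apply ℝ E (EuclideanSpace.single j 1)) (fderiv ℝ η y)) := by
    funext y; rw [jacMatrix_apply]; rfl
  rw [h]
  exact (EuclideanSpace.proj i).differentiable.comp
    ((ContinuousLinearMap.apply ℝ E (EuclideanSpace.single j 1)).differentiable.comp
      ((hη.fderiv_right (m := (⊤ : ℕ∞)) (by exact_mod_cast le_top)).differentiable
        (by simp)))

lemma diff_vdiv {η : E → E} (hη : ContDiff ℝ (⊤ : ℕ∞) η) :
    Differentiable ℝ (vdiv η) := by
  have h : vdiv η = fun y => ∑ i, jacMatrix η y i i := by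
    funext y; rw [vdiv_eq_trace]; rfl
  rw [h]
  exact Differentiable.fun_sum fun i _ => diff_jac_entry hη i i

theorem flow_jac_deriv (η : E → E) (hη : ContDiff ℝ (⊤ : ℕ∞) η)
    (Φ : ℝ → E → E)
    (hΦ : ContDiff ℝ (⊤ : ℕ∞) (fun p : ℝ × E => Φ p.1 p.2))
    (hΦt : ∀ t x, HasDerivAt (fun s => Φ s x) (η (Φ t x)) t)
    (x : E) (t : ℝ) (i j : Fin d) :
    HasDerivAt (fun s => jacMatrix (Φ s) x i j)
      ((jacMatrix η (Φ t x) * jacMatrix (Φ t) x) i j) t := by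
  set Fm : ℝ × E → E := fun p => Φ p.1 p.2 with hFm
  have hFd : Differentiable ℝ Fm := hΦ.differentiable (by simp)
  set g : ℝ × E → (ℝ × E) →L[ℝ] E := fderiv ℝ Fm with hgdef
  have hg : ContDiff ℝ (⊤ : ℕ∞) g := hΦ.fderiv_right (by exact_mod_cast le_top)
  have hgd : Differentiable ℝ g := hg.differentiable (by simp)
  -- space derivative of Φ t equals g (t,x) ∘ inr
  have hspace : ∀ (t : ℝ) (x : E),
      HasFDerivAt (Φ t) ((g (t, x)).comp (ContinuousLinearMap.inr ℝ ℝ E)) x := by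
    intro t x
    have h2 : HasFDerivAt (fun y : E => ((t, y) : ℝ × E))
        (ContinuousLinearMap.inr ℝ ℝ E) x := (hasFDerivAt_prodMk_right t x)
    exact (hFd (t, x)).hasFDerivAt.comp x h2
  -- time derivative of Fm equals g p (1,0) and equals η (Fm p)
  have hcurve : ∀ (t : ℝ) (x : E), HasDerivAt (fun s : ℝ => ((s, x) : ℝ × E)) (1, 0) t :=
    fun t x => (hasDerivAt_id t).prodMk (hasDerivAt_const t x)
  have hgeval : ∀ p : ℝ × E, g p ((1 : ℝ), (0 : E)) = η (Fm p) := by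
    rintro ⟨a, b⟩
    have h1 : HasDerivAt (fun s => Fm (s, b)) (g (a, b) (1, 0)) a :=
      by have := (hFd (a, b)).hasFDerivAt.comp_hasDerivAt a (hcurve a b); exact this
    exact h1.unique (hΦt a b)
  -- symmetry of second derivative
  have hkey : ∀ v : E, fderiv ℝ g (t, x) ((1 : ℝ), (0 : E)) ((0 : ℝ), v)
      = fderiv ℝ η (Φ t x) (fderiv ℝ (Φ t) x v) := by
    intro v
    have hsymm := second_derivative_symmetric (f := Fm) (f' := g)
      (f'' := fderiv ℝ g (t, x)) (fun y => (hFd y).hasFDerivAt)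
      ((hgd (t, x)).hasFDerivAt) ((0 : ℝ), v) ((1 : ℝ), (0 : E))
    rw [← hsymm]
    -- compute fderiv of p ↦ g p (1,0) = η ∘ Fm
    have happ : HasFDerivAt (fun p : ℝ × E => g p ((1 : ℝ), (0 : E)))
        ((ContinuousLinearMap.apply ℝ E ((1 : ℝ), (0 : E))).comp (fderiv ℝ g (t, x))) (t, x) :=
      (ContinuousLinearMap.apply ℝ E ((1 : ℝ), (0 : E))).hasFDerivAt.comp (t, x)
        (hgd (t, x)).hasFDerivAt
    have hcomp : HasFDerivAt (fun p : ℝ × E => g p ((1 : ℝ), (0 : E)))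
        ((fderiv ℝ η (Fm (t, x))).comp (g (t, x))) (t, x) := by
      have : (fun p : ℝ × E => g p ((1 : ℝ), (0 : E))) = fun p => η (Fm p) := funext hgeval
      rw [this]
      exact ((hη.differentiable (by simp) (Fm (t, x))).hasFDerivAt).comp (t, x)
        (hFd (t, x)).hasFDerivAt
    have huniq := happ.unique hcomp
    have := congrArg (fun (L : (ℝ × E) →L[ℝ] E) => L ((0 : ℝ), v)) huniq
    simp only [ContinuousLinearMap.comp_apply, ContinuousLinearMap.apply_apply] at this
    rw [this, (hspace t x).fderiv]
    rfl
  -- entrywise conclusion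
  have hψ : HasDerivAt (fun s => g (s, x)) (fderiv ℝ g (t, x) ((1 : ℝ), (0 : E))) t :=
    (hgd (t, x)).hasFDerivAt.comp_hasDerivAt t (hcurve t x)
  have hentry : HasDerivAt (fun s => (g (s, x) ((0 : ℝ), EuclideanSpace.single j 1)) i)
      ((fderiv ℝ g (t, x) ((1 : ℝ), (0 : E)) ((0 : ℝ), EuclideanSpace.single j 1)) i) t := by
    have h1 := ((ContinuousLinearMap.apply ℝ E
      ((0 : ℝ), EuclideanSpace.single j (1 : ℝ))).hasFDerivAt).comp_hasDerivAt t hψ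
    exact ((EuclideanSpace.proj i).hasFDerivAt).comp_hasDerivAt t h1
  have hfun : (fun s => jacMatrix (Φ s) x i j)
      = fun s => (g (s, x) ((0 : ℝ), EuclideanSpace.single j 1)) i := by
    funext s
    rw [jacMatrix_apply, (hspace s x).fderiv]
    rfl
  rw [hfun, jacMatrix_mul_apply]
  have hval : (fderiv ℝ g (t, x) ((1 : ℝ), (0 : E)) ((0 : ℝ), EuclideanSpace.single j 1)) i
      = (fderiv ℝ η (Φ t x) (fderiv ℝ (Φ t) x (EuclideanSpace.single j 1))) i := by
    rw [hkey]
  exact hval ▸ hentry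


lemma dirDerivMat_add_transpose {η : E → E} (hη : ContDiff ℝ (⊤ : ℕ∞) η) (x : E) :
    dirDerivMat η (fun y => (jacMatrix η y)ᵀ + jacMatrix η y) x
      = (dirDerivMat η (jacMatrix η) x)ᵀ + dirDerivMat η (jacMatrix η) x := by
  ext i j
  simp only [dirDerivMat, Matrix.of_apply, Matrix.add_apply, Matrix.transpose_apply]
  rw [fderiv_fun_add ((diff_jac_entry hη j i) x) ((diff_jac_entry hη i j) x)]
  rfl

end Aux

theorem stmt_11 {d : ℕ}
    (η : EuclideanSpace ℝ (Fin d) → EuclideanSpace ℝ (Fin d))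
    (hη : ContDiff ℝ (⊤ : ℕ∞) η) (hηc : HasCompactSupport η)
    (Φ : ℝ → EuclideanSpace ℝ (Fin d) → EuclideanSpace ℝ (Fin d))
    (hΦ : ContDiff ℝ (⊤ : ℕ∞) (fun p : ℝ × EuclideanSpace ℝ (Fin d) => Φ p.1 p.2))
    (hΦ0 : ∀ x, Φ 0 x = x)
    (hΦt : ∀ t x, HasDerivAt (fun s => Φ s x) (η (Φ t x)) t)
    (A : ℝ → EuclideanSpace ℝ (Fin d) → Matrix (Fin d) (Fin d) ℝ)
    (hA : ∀ t x, A t x =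
      ((jacMatrix (Φ t) x).det) •
        ((jacMatrix (Φ t) x)⁻¹ * ((jacMatrix (Φ t) x)⁻¹)ᵀ)) :
    ∀ x, ∀ i j : Fin d,
      deriv (deriv (fun t : ℝ => A t x i j)) 0 = 2 * delta2A η x i j := by
  intro x i j
  set m : ℝ → Matrix (Fin d) (Fin d) ℝ := fun t => jacMatrix (Φ t) x with hm_def
  set B : ℝ → Matrix (Fin d) (Fin d) ℝ := fun t => jacMatrix η (Φ t x) with hB_def
  set u : ℝ → Matrix (Fin d) (Fin d) ℝ := fun t => (m t)⁻¹ with hu_def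
  set D : ℝ → ℝ := fun t => (m t).det with hDdef
  set sf : ℝ → ℝ := fun t => vdiv η (Φ t x) with hsf_def
  have hm : ∀ t, HDm m (B t * m t) t := fun t i j => flow_jac_deriv η hη Φ hΦ hΦt x t i j
  have hD : ∀ t, HasDerivAt D (sf t * D t) t := by
    intro t
    have h := hasDerivAt_det (m := m) (m' := B t * m t) (hm t)
    rw [jacobi_sum (m t) (B t), ← vdiv_eq_trace] at h
    exact h
  have hDdiff : Differentiable ℝ D := fun t => (hD t).differentiableAt
  have hDcont : Continuous D := hDdiff.continuous
  have hm0 : m 0 = 1 := by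
    have h : Φ 0 = fun y => y := funext hΦ0
    show jacMatrix (Φ 0) x = 1
    rw [h]; exact jacMatrix_id x
  have hD0 : D 0 = 1 := by show (m 0).det = 1; rw [hm0]; simp
  have hSopen : IsOpen {t : ℝ | D t ≠ 0} := isOpen_ne.preimage hDcont
  have hS0 : {t : ℝ | D t ≠ 0} ∈ nhds (0 : ℝ) := hSopen.mem_nhds (by simp [hD0])
  have hinv1 : ∀ t, D t ≠ 0 → m t * u t = 1 := fun t ht =>
    Matrix.mul_nonsing_inv _ (isUnit_iff_ne_zero.2 ht)
  have hinv2 : ∀ t, D t ≠ 0 → u t * m t = 1 := fun t ht =>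
    Matrix.nonsing_inv_mul _ (isUnit_iff_ne_zero.2 ht)
  -- adjugate entries are differentiable
  have hadj : ∀ t (a b : Fin d), DifferentiableAt ℝ (fun s => (m s).adjugate a b) t := by
    intro t a b
    have hupd : ∀ p q, HasDerivAt (fun s => ((m s).updateRow b ((Pi.single a 1 : Fin d → ℝ))) p q)
        (((B t * m t).updateRow b 0) p q) t := by
      intro p q
      rcases eq_or_ne p b with rfl | hne
      · simpa [Matrix.updateRow_apply] using hasDerivAt_const t ((Pi.single a 1 : Fin d → ℝ) q)
      · simpa [Matrix.updateRow_apply, hne] using hm t p q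
    have hdet := hasDerivAt_det (fun p q => hupd p q)
    have heq : (fun s => (m s).adjugate a b)
        = fun s => ((m s).updateRow b ((Pi.single a 1 : Fin d → ℝ))).det := by
      funext s; rw [Matrix.adjugate_apply]
    rw [heq]
    exact hdet.differentiableAt
  have hu_diff : ∀ t, D t ≠ 0 → ∀ a b, DifferentiableAt ℝ (fun s => u s a b) t := by
    intro t ht a b
    have heq : (fun s => u s a b) = fun s => (D s)⁻¹ * (m s).adjugate a b := by
      funext s
      show (m s)⁻¹ a b = (m s).det⁻¹ * (m s).adjugate a b
      rw [Matrix.inv_def]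
      simp [Ring.inverse_eq_inv', Matrix.smul_apply, smul_eq_mul]
    rw [heq]
    exact (((hD t).differentiableAt).inv ht).mul (hadj t a b)
  have hDu : ∀ t, D t ≠ 0 → HDm u (-(u t * B t)) t := by
    intro t ht
    set v : Matrix (Fin d) (Fin d) ℝ := Matrix.of (fun a b => deriv (fun s => u s a b) t)
      with hv_def
    have huv : HDm u v t := fun a b => (hu_diff t ht a b).hasDerivAt
    have hMul : HDm (fun s => m s * u s) (B t * m t * u t + m t * v) t := (hm t).mul huv
    have hconst : ∀ a b, HasDerivAt (fun s => (m s * u s) a b) 0 t := by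
      intro a b
      have hev : (fun s => (m s * u s) a b)
          =ᶠ[nhds t] fun _ => (1 : Matrix (Fin d) (Fin d) ℝ) a b := by
        filter_upwards [hSopen.mem_nhds ht] with s hs
        rw [hinv1 s hs]
      exact (hasDerivAt_const t _).congr_of_eventuallyEq hev
    have hzero : B t * m t * u t + m t * v = 0 := by
      ext a b
      exact (hMul a b).unique (hconst a b)
    have h1 : m t * v = -(B t * m t * u t) := eq_neg_of_add_eq_zero_right hzero
    have h2 : B t * m t * u t = B t := by rw [Matrix.mul_assoc, hinv1 t ht, Matrix.mul_one]
    have hv : v = -(u t * B t) := by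
      calc v = (u t * m t) * v := by rw [hinv2 t ht, Matrix.one_mul]
        _ = u t * (m t * v) := by rw [Matrix.mul_assoc]
        _ = u t * -(B t) := by rw [h1, h2]
        _ = -(u t * B t) := by rw [Matrix.mul_neg]
    exact hv ▸ huv
  -- derivatives of B and sf at 0
  have hflow0 : HasDerivAt (fun t => Φ t x) (η x) 0 := by
    have h := hΦt 0 x; rwa [hΦ0 x] at h
  have hB0 : HDm B (dirDerivMat η (jacMatrix η) x) 0 := by
    intro a b
    have h1 : HasFDerivAt (fun y => jacMatrix η y a b)
        (fderiv ℝ (fun y => jacMatrix η y a b) x) (Φ 0 x) := by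
      rw [hΦ0 x]; exact ((diff_jac_entry hη a b) x).hasFDerivAt
    have h2 := h1.comp_hasDerivAt 0 hflow0
    simpa [dirDerivMat, Function.comp_def] using h2
  have hsf0 : HasDerivAt sf (fderiv ℝ (vdiv η) x (η x)) 0 := by
    have h1 : HasFDerivAt (vdiv η) (fderiv ℝ (vdiv η) x) (Φ 0 x) := by
      rw [hΦ0 x]; exact ((diff_vdiv hη) x).hasFDerivAt
    exact h1.comp_hasDerivAt 0 hflow0
  have hu0eq : u 0 = 1 := by show (m 0)⁻¹ = 1; rw [hm0]; simp
  have hB0eq : B 0 = jacMatrix η x := by show jacMatrix η (Φ 0 x) = _; rw [hΦ0 x]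
  have hsf0eq : sf 0 = vdiv η x := by show vdiv η (Φ 0 x) = _; rw [hΦ0 x]
  -- the first-derivative function G
  set G : ℝ → Matrix (Fin d) (Fin d) ℝ := fun t =>
    (sf t * D t) • (u t * (u t)ᵀ)
      + D t • ((-(u t * B t)) * (u t)ᵀ + u t * (-(u t * B t))ᵀ) with hG_def
  have hAeq : (fun t : ℝ => A t x) = fun t => D t • (u t * (u t)ᵀ) := by
    funext t; exact hA t x
  have hG' : ∀ t, D t ≠ 0 → HDm (fun s => A s x) (G t) t := by
    intro t ht
    have h := HDm.smul (hD t) ((hDu t ht).mul ((hDu t ht).transpose))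
    rw [hAeq]
    exact h
  have hfderiv_ev : deriv (fun t => A t x i j) =ᶠ[nhds (0:ℝ)] fun t => G t i j := by
    filter_upwards [hS0] with t ht
    exact ((hG' t ht) i j).deriv
  rw [hfderiv_ev.deriv_eq]
  -- derivative of G at 0
  have hu0 : HDm u (-(u 0 * B 0)) 0 := hDu 0 (by rw [hD0]; norm_num)
  have hD0' : HasDerivAt D (sf 0 * D 0) 0 := hD 0
  have h1 : HDm (fun t => u t * B t) ((-(u 0 * B 0)) * B 0 + u 0 * dirDerivMat η (jacMatrix η) x) 0 :=
    hu0.mul hB0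
  have h2 := h1.neg
  have h3 := h2.mul (hu0.transpose)
  have h4 := hu0.mul (h2.transpose)
  have hQd := h3.add h4
  have hP := hu0.mul (hu0.transpose)
  have hsD := hsf0.fun_mul hD0'
  have hGd := (HDm.smul hsD hP).add (HDm.smul hD0' hQd)
  refine (hGd i j).deriv.trans ?_
  -- final algebra
  have hgrad : (inner ℝ (η x) (gradient (vdiv η) x) : ℝ) = fderiv ℝ (vdiv η) x (η x) := by
    rw [real_inner_comm]
    show (inner ℝ (gradient (vdiv η) x) (η x) : ℝ) = _
    rw [gradient, InnerProductSpace.toDual_symm_apply]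
  have hVal :
      (fderiv ℝ (vdiv η) x (η x) * D 0 + sf 0 * (sf 0 * D 0)) • (u 0 * (u 0)ᵀ)
          + (sf 0 * D 0) • ((-(u 0 * B 0)) * (u 0)ᵀ + u 0 * (-(u 0 * B 0))ᵀ)
        + ((sf 0 * D 0) • ((-(u 0 * B 0)) * (u 0)ᵀ + u 0 * (-(u 0 * B 0))ᵀ)
          + D 0 • (((-((-(u 0 * B 0)) * B 0 + u 0 * dirDerivMat η (jacMatrix η) x)) * (u 0)ᵀ
              + (-(u 0 * B 0)) * (-(u 0 * B 0))ᵀ)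
            + ((-(u 0 * B 0)) * (-(u 0 * B 0))ᵀ
              + u 0 * (-((-(u 0 * B 0)) * B 0 + u 0 * dirDerivMat η (jacMatrix η) x))ᵀ)))
      = (2 : ℝ) • delta2A η x := by
    rw [hu0eq, hB0eq, hsf0eq, hD0]
    rw [delta2A, dirDerivMat_add_transpose hη x, ← hgrad]
    simp only [Matrix.one_mul, Matrix.mul_one, mul_one, one_mul, Matrix.transpose_one,
      Matrix.transpose_neg, Matrix.transpose_mul, Matrix.neg_mul, Matrix.mul_neg, neg_neg,
      one_smul, Matrix.transpose_transpose, Matrix.transpose_add]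
    module
  rw [hVal]
  simp [Matrix.smul_apply]
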